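/- Let C, C₁, C₂, … be Archimedean copulas with (normalized, right-continuous at 0) generators φ, φ₁, φ₂, … such that (φ_n) converges pointwise to φ on (0,1], and suppose C is non-strict (φ(0) < ∞). Then for every x ∈ Cont(D⁺φ) and every y with 0 < y < f^0(x) one has lim_{n→∞} K_{C_n}(x,[0,y]) = 0 = K_C(x,[0,y]). -/

import Mathlib

open MeasureTheory Filter Set
open scoped ENNReal

noncomputable section

/-- Right-hand derivative (of a convex function on `[0,1]`) of `f` at `x`, realized as the
infimum of the forward difference quotients with right endpoint in `(x, 1]`. -/
noncomputable def rightD (f : ℝ → ℝ) (x : ℝ) : ℝ :=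
  sInf ((fun y => (f y - f x) / (y - x)) '' Set.Ioc x 1)

/-- `φ : [0,1] → [0,∞]` is a (normalized, right-continuous at `0`) generator of an
Archimedean copula: convex, strictly decreasing, `φ 1 = 0`, finite on `(0,1]`,
right-continuous at `0` and normalized by `φ (1/2) = 1`. -/
structure IsGenerator (φ : ℝ → ℝ≥0∞) : Prop where
  convex : ∀ x ∈ Set.Icc (0:ℝ) 1, ∀ y ∈ Set.Icc (0:ℝ) 1, ∀ t ∈ Set.Icc (0:ℝ) 1,
    φ (t * x + (1 - t) * y) ≤ ENNReal.ofReal t * φ x + ENNReal.ofReal (1 - t) * φ y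
  strict_anti : ∀ x ∈ Set.Icc (0:ℝ) 1, ∀ y ∈ Set.Icc (0:ℝ) 1, x < y → φ y < φ x
  map_one : φ 1 = 0
  finite : ∀ x ∈ Set.Ioc (0:ℝ) 1, φ x < ⊤
  rightCont_zero : Filter.Tendsto φ (nhdsWithin 0 (Set.Ioi 0)) (nhds (φ 0))
  normalized : φ (1/2) = 1

/-- Pseudo-inverse `φ⁻` of a generator: `φ⁻ s = φ⁻¹ s` for `s < φ 0` and `0` for `s ≥ φ 0`. -/
noncomputable def pseudoInv (φ : ℝ → ℝ≥0∞) (s : ℝ≥0∞) : ℝ :=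
  sSup {x | x ∈ Set.Icc (0:ℝ) 1 ∧ s ≤ φ x}

/-- The Archimedean copula generated by `φ`: `C(x,y) = φ⁻(φ x + φ y)`. -/
noncomputable def archCopula (φ : ℝ → ℝ≥0∞) (x y : ℝ) : ℝ :=
  pseudoInv φ (φ x + φ y)

/-- The right-hand derivative `D⁺φ` of a generator. -/
noncomputable def Dplus (φ : ℝ → ℝ≥0∞) (x : ℝ) : ℝ :=
  rightD (fun t => (φ t).toReal) x

/-- The set `Cont(D⁺φ)` of continuity points of `D⁺φ` in `(0,1)`. -/
def ContD (φ : ℝ → ℝ≥0∞) : Set ℝ :=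
  {x | x ∈ Set.Ioo (0:ℝ) 1 ∧ ContinuousAt (Dplus φ) x}

/-- The `t`-level function `f^t(x) = φ⁻(φ t − φ x)` of the Archimedean copula generated
by `φ`. -/
noncomputable def levelFn (φ : ℝ → ℝ≥0∞) (t x : ℝ) : ℝ :=
  pseudoInv φ (φ t - φ x)

/-- The Kendall distribution function `F^Kendall(x) = x − φ(x)/D⁺φ(x)` of the Archimedean
copula generated by `φ`. -/
noncomputable def kendall (φ : ℝ → ℝ≥0∞) (x : ℝ) : ℝ :=
  x - (φ x).toReal / Dplus φ x

/-- The Markov kernel (as conditional distribution function `(x,y) ↦ K_C(x,[0,y])`) of the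
Archimedean copula generated by `φ`. -/
noncomputable def archKernel (φ : ℝ → ℝ≥0∞) (x y : ℝ) : ℝ :=
  if x = 0 ∨ x = 1 then 1
  else if y < levelFn φ 0 x then 0
  else Dplus φ x / Dplus φ (archCopula φ x y)

/-- The metric `D₁` between two copulas, expressed via their conditional distribution
functions `K₁, K₂` (with `Kᵢ x y = K_{Cᵢ}(x,[0,y])`). -/
noncomputable def D1 (K1 K2 : ℝ → ℝ → ℝ) : ℝ :=
  ∫ y in Set.Icc (0:ℝ) 1, ∫ x in Set.Icc (0:ℝ) 1, |K1 x y - K2 x y|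

/-- Conditional distribution function of the independence copula `Π`. -/
def piKernel : ℝ → ℝ → ℝ := fun _ y => y

/-- Dependence measure `ζ₁(C) = 3 D₁(C, Π)`. -/
noncomputable def zeta1 (K : ℝ → ℝ → ℝ) : ℝ := 3 * D1 K piKernel

/-- Dependence measure `r(C) = 6 ∫∫ K_C(x,[0,y])² dλ(x) dλ(y) − 2`. -/
noncomputable def rdep (K : ℝ → ℝ → ℝ) : ℝ :=
  6 * (∫ y in Set.Icc (0:ℝ) 1, ∫ x in Set.Icc (0:ℝ) 1, (K x y) ^ 2) - 2

/-- Weak conditional convergence of a sequence of copulas, in terms of their conditional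
distribution functions: for λ-a.e. `x ∈ [0,1]` the measures `K_{C_n}(x,·)` converge weakly
to `K_C(x,·)`, i.e. the conditional distribution functions converge at every continuity
point of `y ↦ K_C(x,[0,y])` in `[0,1]`. -/
def WeakCondConv (Kseq : ℕ → ℝ → ℝ → ℝ) (K : ℝ → ℝ → ℝ) : Prop :=
  ∀ᵐ x ∂(volume.restrict (Set.Icc (0:ℝ) 1)),
    ∀ y ∈ Set.Icc (0:ℝ) 1, ContinuousWithinAt (fun t => K x t) (Set.Icc 0 1) y →
      Filter.Tendsto (fun n => Kseq n x y) Filter.atTop (nhds (K x y))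

section AuxLemmas


lemma convex_left_bound {f : ℝ → ℝ} {s : Set ℝ} (hf : ConvexOn ℝ s f) {w c A : ℝ}
    (hw : w ∈ s) (hc : c ∈ s) (hwc : w < c) (h : ∀ t ∈ Set.Ioo w c, A ≤ f t) : A ≤ f c := by
  have hsub : Set.Icc w c ⊆ s := hf.1.ordConnected.out hw hc
  set w' := (w + c) / 2 with hw'def
  have hww' : w < w' := by rw [hw'def]; linarith
  have hw'c : w' < c := by rw [hw'def]; linarith
  have hw's : w' ∈ s := hsub ⟨hww'.le, hw'c.le⟩
  set σ := (f w' - f w) / (w' - w) with hσdef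
  have key : ∀ t ∈ Set.Ioo w' c, A - |σ| * (c - t) ≤ f c := by
    intro t ht
    have hts : t ∈ s := hsub ⟨(hww'.trans ht.1).le, ht.2.le⟩
    have h1 : σ ≤ (f t - f w') / (t - w') := hf.slope_mono_adjacent hw hts hww' ht.1
    have h2 : (f t - f w') / (t - w') ≤ (f c - f t) / (c - t) :=
      hf.slope_mono_adjacent hw's hc ht.1 ht.2
    have hct : 0 < c - t := by linarith [ht.2]
    have h3 : σ * (c - t) ≤ f c - f t := by
      have h4 := (h1.trans h2)
      calc σ * (c - t) ≤ ((f c - f t) / (c - t)) * (c - t) :=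
            mul_le_mul_of_nonneg_right h4 hct.le
        _ = f c - f t := by field_simp
    have hA := h t ⟨hww'.trans ht.1, ht.2⟩
    have h5 : -(|σ| * (c - t)) ≤ σ * (c - t) := by
      have h6 := neg_abs_le σ
      nlinarith [hct.le]
    linarith
  refine le_of_forall_pos_le_add ?_
  intro δ hδ
  set η := δ / (|σ| + 1) with hηdef
  have habs : (0:ℝ) < |σ| + 1 := by positivity
  have hηpos : 0 < η := div_pos hδ habs
  set t := max ((w' + c) / 2) (c - η) with htdef
  have h1 : w' < t := lt_max_of_lt_left (by linarith)
  have h2 : t < c := max_lt (by linarith) (by linarith)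
  have h3 : c - t ≤ η := by
    have := le_max_right ((w' + c) / 2) (c - η); linarith
  have hkey := key t ⟨h1, h2⟩
  have hb : |σ| * (c - t) ≤ |σ| * η := mul_le_mul_of_nonneg_left h3 (abs_nonneg σ)
  have hb2 : |σ| * η ≤ δ := by
    rw [hηdef]
    rw [div_eq_inv_mul, ← mul_assoc]
    have : |σ| * (|σ| + 1)⁻¹ ≤ 1 := by
      rw [mul_inv_le_iff₀ habs]; linarith [abs_nonneg σ]
    nlinarith [hδ.le]
  linarith

lemma convex_right_bound {f : ℝ → ℝ} {s : Set ℝ} (hf : ConvexOn ℝ s f) {w y b A : ℝ}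
    (hw : w ∈ s) (hy : y ∈ s) (hb : b ∈ s) (hwy : w < y) (hyb : y < b)
    (h : ∀ t ∈ Set.Ioc y b, f t ≤ A) : f y ≤ A := by
  have hsub : Set.Icc y b ⊆ s := hf.1.ordConnected.out hy hb
  set σ := (f y - f w) / (y - w) with hσdef
  have key : ∀ t ∈ Set.Ioc y b, f y ≤ A + |σ| * (t - y) := by
    intro t ht
    have hts : t ∈ s := hsub ⟨ht.1.le, ht.2⟩
    have h1 : σ ≤ (f t - f y) / (t - y) := hf.slope_mono_adjacent hw hts hwy ht.1
    have hty : 0 < t - y := by linarith [ht.1]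
    have h2 : σ * (t - y) ≤ f t - f y := by
      calc σ * (t - y) ≤ ((f t - f y) / (t - y)) * (t - y) :=
            mul_le_mul_of_nonneg_right h1 hty.le
        _ = f t - f y := by field_simp
    have h3 := h t ht
    have h4 : -(|σ| * (t - y)) ≤ σ * (t - y) := by
      have := neg_abs_le σ
      nlinarith [hty.le]
    linarith
  refine le_of_forall_pos_le_add ?_
  intro δ hδ
  have habs : (0:ℝ) < |σ| + 1 := by positivity
  set η := δ / (|σ| + 1) with hηdef
  have hηpos : 0 < η := div_pos hδ habs
  set t := min b (y + η) with htdef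
  have h1 : y < t := lt_min hyb (by linarith)
  have h2 : t ≤ b := min_le_left _ _
  have h3 : t - y ≤ η := by
    have := min_le_right b (y + η); linarith
  have hkey := key t ⟨h1, h2⟩
  have hb1 : |σ| * (t - y) ≤ |σ| * η := mul_le_mul_of_nonneg_left h3 (abs_nonneg σ)
  have hb2 : |σ| * η ≤ δ := by
    rw [hηdef, div_eq_inv_mul, ← mul_assoc]
    have : |σ| * (|σ| + 1)⁻¹ ≤ 1 := by
      rw [mul_inv_le_iff₀ habs]; linarith [abs_nonneg σ]
    nlinarith [hδ.le]
  linarith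


lemma IsGenerator.anti {ψ : ℝ → ℝ≥0∞} (hψ : IsGenerator ψ) {a b : ℝ}
    (ha : a ∈ Set.Icc (0:ℝ) 1) (hb : b ∈ Set.Icc (0:ℝ) 1) (hab : a ≤ b) : ψ b ≤ ψ a := by
  rcases eq_or_lt_of_le hab with rfl | h
  · exact le_rfl
  · exact (hψ.strict_anti a ha b hb h).le

lemma IsGenerator.ne_top {ψ : ℝ → ℝ≥0∞} (hψ : IsGenerator ψ) {t : ℝ}
    (ht : t ∈ Set.Ioc (0:ℝ) 1) : ψ t ≠ ⊤ := (hψ.finite t ht).ne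

lemma IsGenerator.convexOn {ψ : ℝ → ℝ≥0∞} (hψ : IsGenerator ψ) :
    ConvexOn ℝ (Set.Ioc (0:ℝ) 1) (fun t => (ψ t).toReal) := by
  refine ⟨convex_Ioc 0 1, ?_⟩
  intro a ha b hb p q hp hq hpq
  have hq' : q = 1 - p := by linarith
  have hIcc : ∀ {t : ℝ}, t ∈ Set.Ioc (0:ℝ) 1 → t ∈ Set.Icc (0:ℝ) 1 := fun ht => ⟨ht.1.le, ht.2⟩
  have hp1 : p ∈ Set.Icc (0:ℝ) 1 := ⟨hp, by linarith⟩
  have h := hψ.convex a (hIcc ha) b (hIcc hb) p hp1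
  have hna : ψ a ≠ ⊤ := hψ.ne_top ha
  have hnb : ψ b ≠ ⊤ := hψ.ne_top hb
  have hrhs : ENNReal.ofReal p * ψ a + ENNReal.ofReal (1 - p) * ψ b ≠ ⊤ := by
    simp [ENNReal.add_ne_top, ENNReal.mul_ne_top, hna, hnb]
  have h2 := ENNReal.toReal_mono hrhs h
  rw [ENNReal.toReal_add (by simp [ENNReal.mul_ne_top, hna]) (by simp [ENNReal.mul_ne_top, hnb]),
    ENNReal.toReal_mul, ENNReal.toReal_mul, ENNReal.toReal_ofReal hp,
    ENNReal.toReal_ofReal (by linarith : (0:ℝ) ≤ 1 - p)] at h2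
  simp only [smul_eq_mul, hq']
  convert h2 using 3 <;> ring

lemma pseudoInv_mem (ψ : ℝ → ℝ≥0∞) (s : ℝ≥0∞) : pseudoInv ψ s ∈ Set.Icc (0:ℝ) 1 :=
  ⟨Real.sSup_nonneg fun _ ht => ht.1.1, Real.sSup_le (fun _ ht => ht.1.2) zero_le_one⟩

lemma le_of_lt_pseudoInv {ψ : ℝ → ℝ≥0∞} (hψ : IsGenerator ψ) {s : ℝ≥0∞} {t : ℝ} (ht : 0 ≤ t)
    (h : t < pseudoInv ψ s) : s ≤ ψ t := by
  have hne : {x | x ∈ Set.Icc (0:ℝ) 1 ∧ s ≤ ψ x}.Nonempty := by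
    by_contra hemp
    rw [Set.not_nonempty_iff_eq_empty] at hemp
    rw [pseudoInv, hemp, Real.sSup_empty] at h
    linarith
  obtain ⟨u, hu, htu⟩ := exists_lt_of_lt_csSup hne h
  exact le_trans hu.2 (hψ.anti ⟨ht, htu.le.trans hu.1.2⟩ hu.1 htu.le)

lemma lt_of_pseudoInv_lt {ψ : ℝ → ℝ≥0∞} {s : ℝ≥0∞} {t : ℝ} (ht : t ∈ Set.Icc (0:ℝ) 1)
    (h : pseudoInv ψ s < t) : ψ t < s := by
  by_contra hc
  push_neg at hc
  have : t ≤ pseudoInv ψ s := le_csSup ⟨1, fun u hu => hu.1.2⟩ ⟨ht, hc⟩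
  linarith

end AuxLemmas

set_option maxHeartbeats 2000000 in
/-- For Archimedean copulas whose generators converge pointwise on
`(0,1]`, with non-strict limit (`φ(0) < ∞`): for every `x ∈ Cont(D⁺φ)` and every `y` with
`0 < y < f⁰(x)` one has `K_{C_n}(x,[0,y]) → 0 = K_C(x,[0,y])`. -/
theorem stmt10 (φ : ℝ → ℝ≥0∞) (φseq : ℕ → ℝ → ℝ≥0∞)
    (hφ : IsGenerator φ) (hφseq : ∀ n, IsGenerator (φseq n))
    (hns : φ 0 < ⊤)
    (hconv : ∀ x ∈ Set.Ioc (0:ℝ) 1,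
      Filter.Tendsto (fun n => φseq n x) Filter.atTop (nhds (φ x))) :
    ∀ x ∈ ContD φ, ∀ y : ℝ, 0 < y → y < levelFn φ 0 x →
      Filter.Tendsto (fun n => archKernel (φseq n) x y) Filter.atTop (nhds 0) ∧
        archKernel φ x y = 0 := by
  intro x hx y hy0 hyL
  obtain ⟨hxI, -⟩ := hx
  have hx0 : (0:ℝ) < x := hxI.1
  have hx1 : x < 1 := hxI.2
  have hxne : ¬ (x = 0 ∨ x = 1) := by
    rintro (rfl | rfl)
    · exact lt_irrefl _ hx0
    · exact lt_irrefl _ hx1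
  have hK0 : archKernel φ x y = 0 := by
    unfold archKernel; rw [if_neg hxne, if_pos hyL]
  refine ⟨?_, hK0⟩
  have hL1 : levelFn φ 0 x ≤ 1 := (pseudoInv_mem φ _).2
  have hy1 : y < 1 := lt_of_lt_of_le hyL hL1
  have hyI : y ∈ Set.Ioc (0:ℝ) 1 := ⟨hy0, hy1.le⟩
  have hxIoc : x ∈ Set.Ioc (0:ℝ) 1 := ⟨hx0, hx1.le⟩
  have hφx_ne : φ x ≠ ⊤ := hφ.ne_top hxIoc
  have hφy_ne : φ y ≠ ⊤ := hφ.ne_top hyI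
  have hφ0_ne : φ 0 ≠ ⊤ := hns.ne
  have hLmem : levelFn φ 0 x ∈ Set.Ioc (0:ℝ) 1 := ⟨hy0.trans hyL, hL1⟩
  set f : ℝ → ℝ := fun t => (φ t).toReal with hfdef
  have hfc : ConvexOn ℝ (Set.Ioc (0:ℝ) 1) f := hφ.convexOn
  -- s := φ x + φ y exceeds φ 0 strictly
  have hkey : (φ 0 - φ x).toReal ≤ f (levelFn φ 0 x) := by
    refine convex_left_bound hfc (w := y) hyI hLmem hyL ?_
    intro t ht
    have h1 : φ 0 - φ x ≤ φ t :=
      le_of_lt_pseudoInv hφ (by linarith [ht.1] : (0:ℝ) ≤ t) ht.2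
    exact ENNReal.toReal_mono (hφ.ne_top ⟨hy0.trans ht.1, ht.2.le.trans hL1⟩) h1
  have hsub_ne : φ 0 - φ x ≠ ⊤ := (tsub_le_self.trans_lt hns).ne
  have hgap : φ 0 < φ x + φ y := by
    have hL : φ 0 - φ x ≤ φ (levelFn φ 0 x) := by
      rw [← ENNReal.toReal_le_toReal hsub_ne (hφ.ne_top hLmem)]
      exact hkey
    have h2 : φ (levelFn φ 0 x) < φ y :=
      hφ.strict_anti y ⟨hy0.le, hy1.le⟩ _ ⟨(hy0.trans hyL).le, hL1⟩ hyL
    have h3 : φ 0 - φ x < φ y := lt_of_le_of_lt hL h2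
    have h4 : φ x ≤ φ 0 := hφ.anti ⟨le_rfl, zero_le_one⟩ ⟨hx0.le, hx1.le⟩ hx0.le
    calc φ 0 = φ x + (φ 0 - φ x) := (add_tsub_cancel_of_le h4).symm
      _ < φ x + φ y := ENNReal.add_lt_add_left hφx_ne h3
  set sR := f x + f y with hsRdef
  have hsum_ne : φ x + φ y ≠ ⊤ := by simp [ENNReal.add_ne_top, hφx_ne, hφy_ne]
  have hsR_eq : sR = (φ x + φ y).toReal := (ENNReal.toReal_add hφx_ne hφy_ne).symm
  set φ0R := (φ 0).toReal with hφ0Rdef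
  have hgapR : φ0R < sR := by
    rw [hsR_eq]
    exact (ENNReal.toReal_lt_toReal hφ0_ne hsum_ne).2 hgap
  set β := (sR - φ0R) / 2 with hβdef
  have hβpos : 0 < β := by rw [hβdef]; linarith
  set σ0 := (f x - f (x/2)) / (x - x/2) with hσ0def
  set M := 1 + |σ0| with hMdef
  have hMpos : 0 < M := by positivity
  have hfn : ∀ t ∈ Set.Ioc (0:ℝ) 1,
      Filter.Tendsto (fun n => ((φseq n) t).toReal) Filter.atTop (nhds (f t)) := by
    intro t ht
    exact (ENNReal.tendsto_toReal (hφ.ne_top ht)).comp (hconv t ht)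
  rw [NormedAddCommGroup.tendsto_nhds_zero]
  intro δ hδ
  set ε := min x (β * δ / (2 * M)) with hεdef
  have hεpos : 0 < ε := lt_min hx0 (by positivity)
  have hεx : ε ≤ x := min_le_left _ _
  have hε1 : ε ≤ 1 := hεx.trans hx1.le
  have hεIoc : ε ∈ Set.Ioc (0:ℝ) 1 := ⟨hεpos, hε1⟩
  have hx2 : x/2 ∈ Set.Ioc (0:ℝ) 1 := ⟨by linarith, by linarith⟩
  -- E1: eventual numerator bound
  have hE1 : ∀ᶠ n in Filter.atTop, |Dplus (φseq n) x| ≤ M := by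
    have htend : Filter.Tendsto
        (fun n => (((φseq n) x).toReal - ((φseq n) (x/2)).toReal) / (x - x/2))
        Filter.atTop (nhds σ0) :=
      ((hfn x hxIoc).sub (hfn (x/2) hx2)).div_const _
    filter_upwards [htend.eventually (lt_mem_nhds (show σ0 - 1 < σ0 by linarith))] with n hn
    set g : ℝ → ℝ := fun t => ((φseq n) t).toReal with hgdef
    have hgc : ConvexOn ℝ (Set.Ioc (0:ℝ) 1) g := (hφseq n).convexOn
    have hDeq : Dplus (φseq n) x = sInf ((fun z => (g z - g x) / (z - x)) '' Set.Ioc x 1) := rfl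
    have hlow : (g x - g (x/2)) / (x - x/2) ≤ Dplus (φseq n) x := by
      rw [hDeq]
      refine le_csInf ⟨_, ⟨1, ⟨hx1, le_refl 1⟩, rfl⟩⟩ ?_
      rintro - ⟨z, hz, rfl⟩
      exact hgc.slope_mono_adjacent hx2 ⟨hx0.trans hz.1, hz.2⟩ (by linarith) hz.1
    have hupp : Dplus (φseq n) x ≤ (g 1 - g x) / (1 - x) := by
      rw [hDeq]
      refine csInf_le ⟨(g x - g (x/2)) / (x - x/2), ?_⟩ ⟨1, ⟨hx1, le_refl 1⟩, rfl⟩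
      rintro - ⟨z, hz, rfl⟩
      exact hgc.slope_mono_adjacent hx2 ⟨hx0.trans hz.1, hz.2⟩ (by linarith) hz.1
    have hg1 : g 1 = 0 := by simp [hgdef, (hφseq n).map_one]
    have hgx : 0 ≤ g x := ENNReal.toReal_nonneg
    have hupp0 : Dplus (φseq n) x ≤ 0 :=
      hupp.trans (div_nonpos_of_nonpos_of_nonneg (by rw [hg1]; linarith) (by linarith))
    have hlow' : σ0 - 1 < Dplus (φseq n) x := lt_of_lt_of_le hn hlow
    rw [abs_le]
    constructor
    · have : -|σ0| ≤ σ0 := neg_abs_le σ0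
      rw [hMdef]; linarith
    · exact hupp0.trans hMpos.le
  -- E2: eventual denominator gap
  have hE2 : ∀ᶠ n in Filter.atTop,
      β + ((φseq n) ε).toReal ≤ ((φseq n) x).toReal + ((φseq n) y).toReal := by
    have htend : Filter.Tendsto
        (fun n => ((φseq n) x).toReal + ((φseq n) y).toReal - ((φseq n) ε).toReal)
        Filter.atTop (nhds (sR - f ε)) := ((hfn x hxIoc).add (hfn y hyI)).sub (hfn ε hεIoc)
    have hfε : f ε ≤ φ0R :=
      ENNReal.toReal_mono hφ0_ne (hφ.anti ⟨le_rfl, zero_le_one⟩ ⟨hεpos.le, hε1⟩ hεpos.le)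
    have hlt : β < sR - f ε := by rw [hβdef]; linarith
    filter_upwards [htend.eventually (lt_mem_nhds hlt)] with n hn
    linarith
  filter_upwards [hE1, hE2] with n hn1 hn2
  rw [Real.norm_eq_abs]
  by_cases hyl : y < levelFn (φseq n) 0 x
  · have : archKernel (φseq n) x y = 0 := by
      unfold archKernel; rw [if_neg hxne, if_pos hyl]
    rw [this]; simpa using hδ
  · have hker : archKernel (φseq n) x y
        = Dplus (φseq n) x / Dplus (φseq n) (archCopula (φseq n) x y) := by
      unfold archKernel; rw [if_neg hxne, if_neg hyl]
    rw [hker]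
    have hψ' := hφseq n
    set g : ℝ → ℝ := fun t => ((φseq n) t).toReal with hgdef
    have hgc : ConvexOn ℝ (Set.Ioc (0:ℝ) 1) g := hψ'.convexOn
    set c := archCopula (φseq n) x y with hcdef
    have hc01 : c ∈ Set.Icc (0:ℝ) 1 := pseudoInv_mem (φseq n) _
    have hψx_ne : (φseq n) x ≠ ⊤ := hψ'.ne_top hxIoc
    have hψy_ne : (φseq n) y ≠ ⊤ := hψ'.ne_top hyI
    have hsn_ne : (φseq n) x + (φseq n) y ≠ ⊤ := by simp [ENNReal.add_ne_top, hψx_ne, hψy_ne]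
    have hrn_eq : g x + g y = ((φseq n) x + (φseq n) y).toReal :=
      (ENNReal.toReal_add hψx_ne hψy_ne).symm
    have hcpi : pseudoInv (φseq n) ((φseq n) x + (φseq n) y) = c := rfl
    -- key : g x + g y ≤ g c
    have hkeyn : g x + g y ≤ g c := by
      rcases eq_or_lt_of_le hc01.1 with hc0 | hc0
      · -- c = 0
        have hsmall : ∀ t ∈ Set.Ioc (0:ℝ) 1, (φseq n) t < (φseq n) x + (φseq n) y := by
          intro t ht
          refine lt_of_pseudoInv_lt ⟨ht.1.le, ht.2⟩ ?_
          rw [hcpi, ← hc0]; exact ht.1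
        have hψ0_ne : (φseq n) 0 ≠ ⊤ := by
          intro htop
          have hrc := hψ'.rightCont_zero
          rw [htop] at hrc
          have h1 : ∀ᶠ t in nhdsWithin (0:ℝ) (Set.Ioi 0), (φseq n) x + (φseq n) y < (φseq n) t :=
            hrc.eventually (lt_mem_nhds (lt_top_iff_ne_top.2 hsn_ne))
          have h2 : ∀ᶠ t in nhdsWithin (0:ℝ) (Set.Ioi 0), t < 1 :=
            (eventually_lt_nhds zero_lt_one).filter_mono nhdsWithin_le_nhds
          have h3 : ∀ᶠ t in nhdsWithin (0:ℝ) (Set.Ioi 0), t ∈ Set.Ioi (0:ℝ) :=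
            eventually_mem_nhdsWithin
          obtain ⟨t, ht1, ht2, ht3⟩ := (h1.and (h2.and h3)).exists
          exact absurd (hsmall t ⟨ht3, ht2.le⟩) (not_lt.2 ht1.le)
        have hlev : ∀ t ∈ Set.Ioc y 1, (φseq n) t < (φseq n) 0 - (φseq n) x := by
          intro t ht
          refine lt_of_pseudoInv_lt ⟨(hy0.trans ht.1).le, ht.2⟩ ?_
          calc pseudoInv (φseq n) ((φseq n) 0 - (φseq n) x) = levelFn (φseq n) 0 x := rfl
            _ ≤ y := not_lt.1 hyl
            _ < t := ht.1
        have hA_ne : (φseq n) 0 - (φseq n) x ≠ ⊤ :=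
          (tsub_le_self.trans_lt (lt_top_iff_ne_top.2 hψ0_ne)).ne
        have hgyle : g y ≤ ((φseq n) 0 - (φseq n) x).toReal := by
          refine convex_right_bound hgc (w := y/2) (b := 1)
            ⟨by linarith, by linarith⟩ hyI ⟨zero_lt_one, le_rfl⟩ (by linarith) hy1 ?_
          intro t ht
          exact ENNReal.toReal_mono hA_ne (hlev t ht).le
        have hψyle : (φseq n) y ≤ (φseq n) 0 - (φseq n) x := by
          rw [← ENNReal.toReal_le_toReal hψy_ne hA_ne]; exact hgyle
        have hs0 : (φseq n) x + (φseq n) y ≤ (φseq n) 0 := by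
          calc (φseq n) x + (φseq n) y ≤ (φseq n) x + ((φseq n) 0 - (φseq n) x) :=
                add_le_add le_rfl hψyle
            _ = (φseq n) 0 :=
                add_tsub_cancel_of_le (hψ'.anti ⟨le_rfl, zero_le_one⟩ ⟨hx0.le, hx1.le⟩ hx0.le)
        rw [← hc0, hrn_eq]
        exact ENNReal.toReal_mono hψ0_ne hs0
      · -- c > 0
        refine convex_left_bound hgc (w := c/2)
          ⟨by linarith, by linarith [hc01.2]⟩ ⟨hc0, hc01.2⟩ (by linarith) ?_
        intro t ht
        have h1 : (φseq n) x + (φseq n) y ≤ (φseq n) t := by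
          refine le_of_lt_pseudoInv hψ' (by linarith [ht.1] : (0:ℝ) ≤ t) ?_
          rw [hcpi]; exact ht.2
        rw [hrn_eq]
        exact ENNReal.toReal_mono (hψ'.ne_top ⟨by linarith [ht.1], ht.2.le.trans hc01.2⟩) h1
    have hcε : c < ε := by
      by_contra hge
      push_neg at hge
      have hcI : c ∈ Set.Ioc (0:ℝ) 1 := ⟨hεpos.trans_le hge, hc01.2⟩
      have hmono : g c ≤ g ε :=
        ENNReal.toReal_mono (hψ'.ne_top hεIoc)
          (hψ'.anti ⟨hεpos.le, hε1⟩ ⟨hcI.1.le, hcI.2⟩ hge)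
      linarith [hkeyn, hn2]
    have hDceq : Dplus (φseq n) c = sInf ((fun z => (g z - g c) / (z - c)) '' Set.Ioc c 1) := rfl
    by_cases hbdd : BddBelow ((fun z => (g z - g c) / (z - c)) '' Set.Ioc c 1)
    · have hslope : Dplus (φseq n) c ≤ (g ε - g c) / (ε - c) := by
        rw [hDceq]; exact csInf_le hbdd ⟨ε, ⟨hcε, hε1⟩, rfl⟩
      have hnum : g ε - g c ≤ -β := by linarith [hkeyn, hn2]
      have hden : 0 < ε - c := by linarith
      have hslope2 : (g ε - g c) / (ε - c) ≤ -(β / ε) := by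
        rw [div_le_iff₀ hden]
        have h1 : (g ε - g c) ≤ -β := hnum
        have h2 : β / ε * (ε - c) ≤ β / ε * ε := by
          apply mul_le_mul_of_nonneg_left (by linarith [hc01.1]) (le_of_lt (div_pos hβpos hεpos))
        have h3 : β / ε * ε = β := by field_simp
        nlinarith [div_pos hβpos hεpos]
      have hDc : Dplus (φseq n) c ≤ -(β / ε) := hslope.trans hslope2
      have hβε : 0 < β / ε := div_pos hβpos hεpos
      rw [abs_div]
      have habsc : β / ε ≤ |Dplus (φseq n) c| := by
        rw [abs_of_neg (by linarith : Dplus (φseq n) c < 0)]; linarith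
      have h2 : |Dplus (φseq n) x| / |Dplus (φseq n) c| ≤ M / (β / ε) :=
        div_le_div₀ hMpos.le hn1 hβε habsc
      have hεle : ε ≤ β * δ / (2 * M) := min_le_right _ _
      have h4 : M / (β / ε) ≤ δ / 2 := by
        rw [div_div_eq_mul_div, div_le_iff₀ hβpos]
        calc M * ε ≤ M * (β * δ / (2 * M)) := by
              exact mul_le_mul_of_nonneg_left hεle hMpos.le
          _ = δ / 2 * β := by field_simp
      linarith
    · have hzero : Dplus (φseq n) c = 0 := by
        rw [hDceq]; exact Real.sInf_of_not_bddBelow hbdd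
      rw [hzero, div_zero]
      simpa using hδ
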